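/- (Identifiable Natural Counterfactuals, Theorem 4.1, model-independence form.) Fix n : ℕ and parent sets pa : Fin n → Finset (Fin n) with every j ∈ pa i satisfying j < i. Let M = (pa, f, μ) and M' = (pa, g, μ') be two topologically ordered SCMs with these parent sets, both satisfying locality, such that every slice u ↦ f i v u and u ↦ g i v u is a strictly monotone increasing bijection of ℝ. Suppose the two models induce identical conditional distributions: Measure.map (f i p) (μ i) = Measure.map (g i p) (μ' i) for every i : Fin n and every p : Fin n → ℝ, and that the CDF of each Measure.map (f i p) (μ i) is injective. Then the two models produce identical counterfactuals: for every observed instance v : Fin n → ℝ, every intervention set C ⊆ Fin n and target values c : Fin n → ℝ, one has solveC_f (solve_f⁻¹ v) = solveC_g (solve_g⁻¹ v), where solve_f, solve_g are the solution maps of M, M' (bijections, with inverses given by abduction) and solveC_f, solveC_g are the solution maps of the corresponding intervened models. -/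
import Mathlib


open MeasureTheory

/-- The cumulative distribution function of a Borel measure on ℝ:
`F_m(x) = m((-∞, x])`. -/
noncomputable def cdfOf (m : Measure ℝ) (x : ℝ) : ℝ := (m (Set.Iic x)).toReal


lemma cdf_map_slice (φ : ℝ → ℝ) (hm : StrictMono φ) (m : Measure ℝ) (u : ℝ) :
    cdfOf (Measure.map φ m) (φ u) = cdfOf m u := by
  unfold cdfOf
  rw [Measure.map_apply hm.monotone.measurable measurableSet_Iic]
  congr 2
  ext x
  simp [hm.le_iff_le]

/-- Identifiable Natural Counterfactuals (model-independence form): two topologically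
ordered SCMs `M = (pa, f, μ)` and `M' = (pa, g, μ')` with the same parent sets,
local mechanisms whose slices are strictly increasing bijections of ℝ, inducing
identical conditional distributions `Measure.map (f i p) (μ i) = Measure.map (g i p) (μ' i)`
with injective CDFs, produce identical counterfactuals: for every observed instance `v`,
every intervention set `C` and target values `c`,
`solveC_f (solve_f⁻¹ v) = solveC_g (solve_g⁻¹ v)`. -/
theorem natural_counterfactuals_identifiable (n : ℕ) (pa : Fin n → Finset (Fin n))
    (hpa : ∀ i : Fin n, ∀ j ∈ pa i, j < i)
    (f g : Fin n → (Fin n → ℝ) → ℝ → ℝ)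
    (hlocf : ∀ i : Fin n, ∀ v w : Fin n → ℝ, (∀ j ∈ pa i, v j = w j) → f i v = f i w)
    (hlocg : ∀ i : Fin n, ∀ v w : Fin n → ℝ, (∀ j ∈ pa i, v j = w j) → g i v = g i w)
    (hmonof : ∀ (i : Fin n) (v : Fin n → ℝ), StrictMono (f i v))
    (hmonog : ∀ (i : Fin n) (v : Fin n → ℝ), StrictMono (g i v))
    (hbijf : ∀ (i : Fin n) (v : Fin n → ℝ), Function.Bijective (f i v))
    (hbijg : ∀ (i : Fin n) (v : Fin n → ℝ), Function.Bijective (g i v))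
    (μ μ' : Fin n → Measure ℝ)
    [∀ i, IsProbabilityMeasure (μ i)] [∀ i, IsProbabilityMeasure (μ' i)]
    (heq : ∀ (i : Fin n) (p : Fin n → ℝ),
      Measure.map (f i p) (μ i) = Measure.map (g i p) (μ' i))
    (hinj : ∀ (i : Fin n) (p : Fin n → ℝ),
      Function.Injective (cdfOf (Measure.map (f i p) (μ i))))
    (solvef solveg : (Fin n → ℝ) → (Fin n → ℝ))
    (hsolvef : ∀ (u : Fin n → ℝ) (i : Fin n), solvef u i = f i (solvef u) (u i))
    (hsolveg : ∀ (u : Fin n → ℝ) (i : Fin n), solveg u i = g i (solveg u) (u i))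
    (C : Set (Fin n)) (c : Fin n → ℝ)
    (solveCf solveCg : (Fin n → ℝ) → (Fin n → ℝ))
    (hsolveCf : ∀ u : Fin n → ℝ,
      (∀ i ∈ C, solveCf u i = c i) ∧ ∀ i ∉ C, solveCf u i = f i (solveCf u) (u i))
    (hsolveCg : ∀ u : Fin n → ℝ,
      (∀ i ∈ C, solveCg u i = c i) ∧ ∀ i ∉ C, solveCg u i = g i (solveCg u) (u i))
    (v : Fin n → ℝ) :
    solveCf (Function.invFun solvef v) = solveCg (Function.invFun solveg v) := by

  classical
  set uf := Function.invFun solvef v with huf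
  set ug := Function.invFun solveg v with hug
  have hsurjf : solvef uf = v := by
    apply Function.invFun_eq
    refine ⟨fun i => Function.invFun (f i v) (v i), ?_⟩
    funext i
    induction i using (wellFounded_lt (α := Fin n)).induction with
    | _ i IH =>
      rw [hsolvef, hlocf i _ v (fun j hj => IH j (hpa i j hj))]
      exact Function.rightInverse_invFun (hbijf i v).2 (v i)
  have hsurjg : solveg ug = v := by
    apply Function.invFun_eq
    refine ⟨fun i => Function.invFun (g i v) (v i), ?_⟩
    funext i
    induction i using (wellFounded_lt (α := Fin n)).induction with
    | _ i IH =>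
      rw [hsolveg, hlocg i _ v (fun j hj => IH j (hpa i j hj))]
      exact Function.rightInverse_invFun (hbijg i v).2 (v i)
  have hkey : ∀ (i : Fin n) (p : Fin n → ℝ), f i p (uf i) = g i p (ug i) := by
    intro i p
    have hfv : f i v (uf i) = v i := by
      have h := hsolvef uf i
      rw [hsurjf] at h
      exact h.symm
    have hgv : g i v (ug i) = v i := by
      have h := hsolveg ug i
      rw [hsurjg] at h
      exact h.symm
    have h1 : cdfOf (μ i) (uf i) = cdfOf (μ' i) (ug i) := by
      have a := cdf_map_slice (f i v) (hmonof i v) (μ i) (uf i)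
      have b := cdf_map_slice (g i v) (hmonog i v) (μ' i) (ug i)
      rw [hfv] at a
      rw [hgv] at b
      rw [← a, ← b, heq i v]
    apply hinj i p
    have a := cdf_map_slice (f i p) (hmonof i p) (μ i) (uf i)
    have b := cdf_map_slice (g i p) (hmonog i p) (μ' i) (ug i)
    show cdfOf (Measure.map (f i p) (μ i)) (f i p (uf i))
        = cdfOf (Measure.map (f i p) (μ i)) (g i p (ug i))
    rw [a, h1, ← b, heq i p]
  funext i
  induction i using (wellFounded_lt (α := Fin n)).induction with
  | _ i IH =>
    by_cases hc : i ∈ C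
    · rw [(hsolveCf uf).1 i hc, (hsolveCg ug).1 i hc]
    · rw [(hsolveCf uf).2 i hc, (hsolveCg ug).2 i hc,
        hlocg i (solveCg ug) (solveCf uf) (fun j hj => (IH j (hpa i j hj)).symm),
        hkey i (solveCf uf)]
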